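/- Let x_l < x_r, let β be twice continuously differentiable on [x_l, x_r] with β(x) ≥ β_0 > 0 for all x, let q and f be continuously differentiable on [x_l, x_r], and let u be three times continuously differentiable on [x_l, x_r] satisfying β(x)·u''(x) + β'(x)·u'(x) − q(x)·u(x) + f(x) = 0 for all x. Then there exists a constant C > 0 such that for every n ≥ 1 and every partition x_l = x_0 < x_1 < ... < x_n = x_r with mesh size h = max_k (x_{k+1} − x_k), the function v_h^{new} defined on each element [x_k, x_{k+1}] by v_h^{new}(x) = u_I^k(x) − (β'(x)/(2β(x)))·(x−x_k)(x−x_{k+1})·(u(x_{k+1})−u(x_k))/(x_{k+1}−x_k) + (q(x)/(2β(x)))·(x−x_k)(x−x_{k+1})·u_I^k(x) − (f(x)/(2β(x)))·(x−x_k)(x−x_{k+1}), with u_I^k the linear interpolant of u on [x_k, x_{k+1}], satisfies |u'(x) − (v_h^{new})'(x)| ≤ C·h^2 for every x lying in the open interior (x_k, x_{k+1}) of any element. -/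

import Mathlib

set_option linter.all false
open Set Filter Topology

lemma abs_sub_le_of_between {t y σ : ℝ} (h1 : min t y ≤ σ) (h2 : σ ≤ max t y) :
    |σ - t| ≤ |y - t| := by
  rcases le_total t y with h | h
  · rw [min_eq_left h] at h1; rw [max_eq_right h] at h2
    rw [abs_of_nonneg (by linarith), abs_of_nonneg (by linarith)]; linarith
  · rw [min_eq_right h] at h1; rw [max_eq_left h] at h2
    rw [abs_of_nonpos (by linarith), abs_of_nonpos (by linarith)]; linarith

lemma mvt_bound' {S : Set ℝ} (hS : Convex ℝ S) {G G' : ℝ → ℝ}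
    (hd : ∀ σ ∈ S, HasDerivWithinAt G (G' σ) S σ) {c : ℝ}
    (hb : ∀ σ ∈ S, |G' σ| ≤ c) {t y : ℝ} (ht : t ∈ S) (hy : y ∈ S) :
    |G y - G t| ≤ c * |y - t| := by
  simpa [Real.norm_eq_abs] using
    Convex.norm_image_sub_le_of_norm_hasDerivWithin_le hd
      (fun σ hσ => by simpa [Real.norm_eq_abs] using hb σ hσ) hS ht hy

lemma taylor2_bound {xl xr : ℝ} {F F' F'' F''' : ℝ → ℝ}
    (hd1 : ∀ σ ∈ Icc xl xr, HasDerivWithinAt F (F' σ) (Icc xl xr) σ)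
    (hd2 : ∀ σ ∈ Icc xl xr, HasDerivWithinAt F' (F'' σ) (Icc xl xr) σ)
    (hd3 : ∀ σ ∈ Icc xl xr, HasDerivWithinAt F'' (F''' σ) (Icc xl xr) σ)
    {M : ℝ} (hb : ∀ σ ∈ Icc xl xr, |F''' σ| ≤ M)
    (taylor1 : ∀ σ ∈ Icc xl xr, ∀ τ ∈ Icc xl xr,
      |F' τ - F' σ - F'' σ * (τ - σ)| ≤ M * (τ - σ) ^ 2)
    {t y : ℝ} (ht : t ∈ Icc xl xr) (hy : y ∈ Icc xl xr) :
    |F y - F t - F' t * (y - t) - F'' t * (y - t) ^ 2 / 2| ≤ M * (y - t) ^ 2 * |y - t| := by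
  set S : Set ℝ := Icc (min t y) (max t y) with hSdef
  have hsub : S ⊆ Icc xl xr := fun σ hσ =>
    ⟨le_trans (le_min ht.1 hy.1) hσ.1, le_trans hσ.2 (max_le ht.2 hy.2)⟩
  have htS : t ∈ S := ⟨min_le_left _ _, le_max_left _ _⟩
  have hyS : y ∈ S := ⟨min_le_right _ _, le_max_right _ _⟩
  have hG : ∀ σ ∈ S, HasDerivWithinAt
      (fun τ => F τ - (F t + F' t * (τ - t) + F'' t / 2 * (τ - t) ^ 2))
      (F' σ - (F' t + F'' t * (σ - t))) S σ := by
    intro σ hσ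
    have hid : HasDerivWithinAt (fun τ : ℝ => τ - t) 1 S σ :=
      (hasDerivWithinAt_id σ S).sub_const t
    have hP : HasDerivWithinAt
        (fun τ => F t + F' t * (τ - t) + F'' t / 2 * (τ - t) ^ 2)
        (F' t + F'' t * (σ - t)) S σ := by
      have h2 := ((hid.const_mul (F' t)).const_add (F t)).add ((hid.pow 2).const_mul (F'' t / 2))
      have h3 : HasDerivWithinAt (fun τ => F t + F' t * (τ - t) + F'' t / 2 * (τ - t) ^ 2)
          (F' t * 1 + F'' t / 2 * (((2 : ℕ) : ℝ) * (σ - t) ^ (2 - 1) * 1)) S σ := h2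
      convert h3 using 1
      push_cast; ring
    exact ((hd1 σ (hsub hσ)).mono hsub).sub hP
  have hGb : ∀ σ ∈ S, |F' σ - (F' t + F'' t * (σ - t))| ≤ M * (y - t) ^ 2 := by
    intro σ hσ
    have h1 : |F' σ - F' t - F'' t * (σ - t)| ≤ M * (σ - t) ^ 2 :=
      taylor1 t ht σ (hsub hσ)
    have h2 : (σ - t) ^ 2 ≤ (y - t) ^ 2 := by
      rw [← sq_abs (σ - t), ← sq_abs (y - t)]
      exact pow_le_pow_left₀ (abs_nonneg _) (abs_sub_le_of_between hσ.1 hσ.2) 2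
    have hM : 0 ≤ M := le_trans (abs_nonneg _) (hb t ht)
    calc |F' σ - (F' t + F'' t * (σ - t))| = |F' σ - F' t - F'' t * (σ - t)| := by congr 1; ring
      _ ≤ M * (σ - t) ^ 2 := h1
      _ ≤ M * (y - t) ^ 2 := mul_le_mul_of_nonneg_left h2 hM
  have key := mvt_bound' (hSdef ▸ convex_Icc _ _) hG hGb htS hyS
  simp only [sub_self, mul_zero, add_zero] at key
  calc |F y - F t - F' t * (y - t) - F'' t * (y - t) ^ 2 / 2|
      = |F y - (F t + F' t * (y - t) + F'' t / 2 * (y - t) ^ 2) -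
          (F t - (F t + F' t * (0:ℝ) + F'' t / 2 * 0 ^ 2))| := by congr 1; ring
    _ ≤ M * (y - t) ^ 2 * |y - t| := by
        convert key using 3 <;> ring


lemma mvt_bound {S : Set ℝ} (hS : Convex ℝ S) {G G' : ℝ → ℝ}
    (hd : ∀ σ ∈ S, HasDerivWithinAt G (G' σ) S σ) {c : ℝ}
    (hb : ∀ σ ∈ S, |G' σ| ≤ c) {t y : ℝ} (ht : t ∈ S) (hy : y ∈ S) :
    |G y - G t| ≤ c * |y - t| := by
  simpa [Real.norm_eq_abs] using
    Convex.norm_image_sub_le_of_norm_hasDerivWithin_le hd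
      (fun σ hσ => by simpa [Real.norm_eq_abs] using hb σ hσ) hS ht hy

lemma taylor1_bound {xl xr : ℝ} {F F' F'' : ℝ → ℝ}
    (hd1 : ∀ σ ∈ Icc xl xr, HasDerivWithinAt F (F' σ) (Icc xl xr) σ)
    (hd2 : ∀ σ ∈ Icc xl xr, HasDerivWithinAt F' (F'' σ) (Icc xl xr) σ)
    {M : ℝ} (hb : ∀ σ ∈ Icc xl xr, |F'' σ| ≤ M)
    {t y : ℝ} (ht : t ∈ Icc xl xr) (hy : y ∈ Icc xl xr) :
    |F y - F t - F' t * (y - t)| ≤ M * (y - t) ^ 2 := by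
  set S : Set ℝ := Icc (min t y) (max t y) with hSdef
  have hsub : S ⊆ Icc xl xr := by
    intro σ hσ
    constructor
    · exact le_trans (le_min ht.1 hy.1) hσ.1
    · exact le_trans hσ.2 (max_le ht.2 hy.2)
  have htS : t ∈ S := ⟨min_le_left _ _, le_max_left _ _⟩
  have hyS : y ∈ S := ⟨min_le_right _ _, le_max_right _ _⟩
  have hG : ∀ σ ∈ S, HasDerivWithinAt
      (fun τ => F τ - (F t + F' t * (τ - t))) (F' σ - F' t) S σ := by
    intro σ hσ
    have h1 : HasDerivWithinAt (fun τ => F t + F' t * (τ - t)) (F' t) S σ := by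
      have := (((hasDerivWithinAt_id σ S).sub_const t).const_mul (F' t)).const_add (F t)
      simpa using this
    exact ((hd1 σ (hsub hσ)).mono hsub).sub h1
  have hGb : ∀ σ ∈ S, |F' σ - F' t| ≤ M * |y - t| := by
    intro σ hσ
    obtain ⟨hσ1, hσ2⟩ := hσ
    have h1 : |F' σ - F' t| ≤ M * |σ - t| :=
      mvt_bound (convex_Icc xl xr) hd2 hb ht (hsub ⟨hσ1, hσ2⟩)
    have h2 : |σ - t| ≤ |y - t| := by
      rcases le_total t y with h | h
      · rw [min_eq_left h] at hσ1; rw [max_eq_right h] at hσ2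
        rw [abs_of_nonneg (by linarith), abs_of_nonneg (by linarith)]; linarith
      · rw [min_eq_right h] at hσ1; rw [max_eq_left h] at hσ2
        rw [abs_of_nonpos (by linarith), abs_of_nonpos (by linarith)]; linarith
    calc |F' σ - F' t| ≤ M * |σ - t| := h1
      _ ≤ M * |y - t| := by
          have hM : 0 ≤ M := le_trans (abs_nonneg _) (hb t ht)
          exact mul_le_mul_of_nonneg_left h2 hM
  have key := mvt_bound (hSdef ▸ convex_Icc _ _) hG hGb htS hyS
  simp only [sub_self, mul_zero, add_zero] at key
  have h3 : M * |y - t| * |y - t| = M * (y - t) ^ 2 := by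
    rw [mul_assoc, ← abs_mul, ← sq, abs_of_nonneg (sq_nonneg _)]
  calc |F y - F t - F' t * (y - t)|
      = |F y - (F t + F' t * (y - t)) - 0| := by rw [sub_zero]; congr 1; ring
    _ ≤ M * |y - t| * |y - t| := key
    _ = M * (y - t) ^ 2 := h3


lemma abs_mul_le' {x y X Y : ℝ} (hx : |x| ≤ X) (hy : |y| ≤ Y) : |x * y| ≤ X * Y := by
  rw [abs_mul]
  exact mul_le_mul hx hy (abs_nonneg _) (le_trans (abs_nonneg _) hx)

section ElemLemma
variable {xl xr β₀ M : ℝ} {β β' β'' q q' f f' u u' u'' u''' : ℝ → ℝ}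

set_option maxHeartbeats 1000000 in
lemma elem_bound
    (hlr : xl < xr) (hβ₀ : 0 < β₀) (hM : 1 ≤ M)
    (hβd : ∀ t ∈ Set.Icc xl xr, HasDerivWithinAt β (β' t) (Set.Icc xl xr) t)
    (hβd2 : ∀ t ∈ Set.Icc xl xr, HasDerivWithinAt β' (β'' t) (Set.Icc xl xr) t)
    (hβlb : ∀ t ∈ Set.Icc xl xr, β₀ ≤ β t)
    (hqd : ∀ t ∈ Set.Icc xl xr, HasDerivWithinAt q (q' t) (Set.Icc xl xr) t)
    (hfd : ∀ t ∈ Set.Icc xl xr, HasDerivWithinAt f (f' t) (Set.Icc xl xr) t)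
    (hu' : ∀ t ∈ Set.Icc xl xr, HasDerivWithinAt u (u' t) (Set.Icc xl xr) t)
    (hu'' : ∀ t ∈ Set.Icc xl xr, HasDerivWithinAt u' (u'' t) (Set.Icc xl xr) t)
    (hu''' : ∀ t ∈ Set.Icc xl xr, HasDerivWithinAt u'' (u''' t) (Set.Icc xl xr) t)
    (hode : ∀ t ∈ Set.Icc xl xr, β t * u'' t + β' t * u' t - q t * u t + f t = 0)
    (hbβ : ∀ t ∈ Set.Icc xl xr, |β t| ≤ M) (hbβ' : ∀ t ∈ Set.Icc xl xr, |β' t| ≤ M)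
    (hbβ'' : ∀ t ∈ Set.Icc xl xr, |β'' t| ≤ M) (hbq : ∀ t ∈ Set.Icc xl xr, |q t| ≤ M)
    (hbq' : ∀ t ∈ Set.Icc xl xr, |q' t| ≤ M) (hbf : ∀ t ∈ Set.Icc xl xr, |f t| ≤ M)
    (hbf' : ∀ t ∈ Set.Icc xl xr, |f' t| ≤ M) (hbu : ∀ t ∈ Set.Icc xl xr, |u t| ≤ M)
    (hbu' : ∀ t ∈ Set.Icc xl xr, |u' t| ≤ M) (hbu'' : ∀ t ∈ Set.Icc xl xr, |u'' t| ≤ M)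
    (hbu''' : ∀ t ∈ Set.Icc xl xr, |u''' t| ≤ M)
    (a b : ℝ) (ha : xl ≤ a) (hb : b ≤ xr) (hab : a < b)
    (vh : ℝ → ℝ)
    (hvh : ∀ τ ∈ Set.Icc a b,
      vh τ = (u a * (b - τ) / (b - a) + u b * (τ - a) / (b - a))
        - β' τ / (2 * β τ) * (τ - a) * (τ - b) * ((u b - u a) / (b - a))
        + q τ / (2 * β τ) * (τ - a) * (τ - b)
          * (u a * (b - τ) / (b - a) + u b * (τ - a) / (b - a))
        - f τ / (2 * β τ) * (τ - a) * (τ - b))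
    (t : ℝ) (ht : t ∈ Set.Ioo a b) :
    |u' t - deriv vh t| ≤
      (2 * M + M ^ 2 * (xr - xl + 1) / (2 * β₀)
        + (2 * M * (M * (M + M * (xr - xl)) + M * M + M + M * M)
           + (M * (M + M * (xr - xl)) + M + M * M) * (2 * M)) / (2 * β₀) ^ 2)
      * (b - a) ^ 2 := by
  have hM0 : (0 : ℝ) ≤ M := le_trans zero_le_one hM
  have hab' : (0 : ℝ) < b - a := sub_pos.mpr hab
  have hIcc : Icc a b ⊆ Icc xl xr := Icc_subset_Icc ha hb
  have htab : t ∈ Icc a b := Ioo_subset_Icc_self ht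
  have htmem : t ∈ Icc xl xr := hIcc htab
  have haK : a ∈ Icc xl xr := ⟨ha, le_trans hab.le hb⟩
  have hbK : b ∈ Icc xl xr := ⟨le_trans ha hab.le, hb⟩
  have hD : b - a ≤ xr - xl := by linarith [haK.1, hbK.2]
  have htK : Icc xl xr ∈ 𝓝 t :=
    Icc_mem_nhds (lt_of_le_of_lt ha ht.1) (lt_of_lt_of_le ht.2 hb)
  have hβpos : ∀ τ ∈ Icc xl xr, 0 < β τ := fun τ hτ => lt_of_lt_of_le hβ₀ (hβlb τ hτ)
  have hβt : HasDerivAt β (β' t) t := (hβd t htmem).hasDerivAt htK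
  have hβ't : HasDerivAt β' (β'' t) t := (hβd2 t htmem).hasDerivAt htK
  have hqt : HasDerivAt q (q' t) t := (hqd t htmem).hasDerivAt htK
  have hft : HasDerivAt f (f' t) t := (hfd t htmem).hasDerivAt htK
  set s : ℝ := (u b - u a) / (b - a) with hs_def
  -- mean value point for the slope
  have hcont : ContinuousOn u (Icc a b) :=
    fun σ hσ => ((hu' σ (hIcc hσ)).continuousWithinAt).mono hIcc
  have hderiv : ∀ σ ∈ Ioo a b, HasDerivAt u (u' σ) σ := fun σ hσ =>
    (hu' σ (hIcc (Ioo_subset_Icc_self hσ))).hasDerivAt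
      (Icc_mem_nhds (lt_of_le_of_lt ha hσ.1) (lt_of_lt_of_le hσ.2 hb))
  obtain ⟨ξ, hξmem, hξ⟩ := exists_hasDerivAt_eq_slope u u' hab hcont hderiv
  have hξK : ξ ∈ Icc xl xr := hIcc (Ioo_subset_Icc_self hξmem)
  have hξs : u' ξ = s := hξ
  have hsb : |s| ≤ M := hξs ▸ hbu' ξ hξK
  -- |u' σ - s| ≤ M (b-a)
  have hu's : ∀ σ ∈ Icc a b, |u' σ - s| ≤ M * (b - a) := by
    intro σ hσ
    have h1 : |u' σ - u' ξ| ≤ M * |σ - ξ| :=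
      mvt_bound' (convex_Icc xl xr) hu'' hbu'' hξK (hIcc hσ)
    rw [hξs] at h1
    refine le_trans h1 (mul_le_mul_of_nonneg_left ?_ hM0)
    rw [abs_le]
    constructor
    · have := hσ.1; have := hξmem.2; linarith
    · have := hσ.2; have := hξmem.1; linarith
  -- |u σ - L σ| ≤ M (b-a)^2
  have huL : ∀ σ ∈ Icc a b, |u σ - (u a + s * (σ - a))| ≤ (M * (b - a)) * (b - a) := by
    intro σ hσ
    have hG : ∀ τ ∈ Icc a b, HasDerivWithinAt
        (fun ρ => u ρ - (u a + s * (ρ - a))) (u' τ - s) (Icc a b) τ := by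
      intro τ hτ
      have h1 : HasDerivWithinAt (fun ρ => u a + s * (ρ - a)) s (Icc a b) τ := by
        simpa using
          (((hasDerivWithinAt_id τ (Icc a b)).sub_const a).const_mul s).const_add (u a)
      exact ((hu' τ (hIcc hτ)).mono hIcc).sub h1
    have h2 := mvt_bound' (convex_Icc a b) hG hu's (left_mem_Icc.mpr hab.le) hσ
    simp only [sub_self, mul_zero, add_zero, sub_zero] at h2
    refine le_trans h2 (mul_le_mul_of_nonneg_left ?_ (by positivity))
    rw [abs_of_nonneg (by linarith [hσ.1])]
    linarith [hσ.2]
  -- first-order Taylor bound for u'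
  have ht1 : ∀ σ ∈ Icc xl xr, ∀ τ ∈ Icc xl xr,
      |u' τ - u' σ - u'' σ * (τ - σ)| ≤ M * (τ - σ) ^ 2 := fun σ hσ τ hτ =>
    taylor1_bound hu'' hu''' hbu''' hσ hτ
  -- the A-term bound
  have hA : |u' t - s - u'' t * (2 * t - a - b) / 2| ≤ 2 * M * (b - a) ^ 2 := by
    have hRa := taylor2_bound hu' hu'' hu''' hbu''' ht1 htmem haK
    have hRb := taylor2_bound hu' hu'' hu''' hbu''' ht1 htmem hbK
    have hsq : ∀ z : ℝ, a ≤ z → z ≤ b → M * (z - t) ^ 2 * |z - t| ≤ M * (b - a) ^ 2 * (b - a) := by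
      intro z hz1 hz2
      have h1 : |z - t| ≤ b - a := by
        rw [abs_le]; constructor
        · have := ht.2; linarith
        · have := ht.1; linarith
      have h2 : (z - t) ^ 2 ≤ (b - a) ^ 2 := by
        rw [← sq_abs (z - t)]
        have : |z - t| ^ 2 ≤ (b - a) ^ 2 := pow_le_pow_left₀ (abs_nonneg _) h1 2
        exact this
      have h3 : (z - t) ^ 2 * |z - t| ≤ (b - a) ^ 2 * (b - a) :=
        mul_le_mul h2 h1 (abs_nonneg _) (by positivity)
      calc M * (z - t) ^ 2 * |z - t| = M * ((z - t) ^ 2 * |z - t|) := by ring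
        _ ≤ M * ((b - a) ^ 2 * (b - a)) := mul_le_mul_of_nonneg_left h3 hM0
        _ = M * (b - a) ^ 2 * (b - a) := by ring
    have hRa' := le_trans hRa (hsq a le_rfl hab.le)
    have hRb' := le_trans hRb (hsq b hab.le le_rfl)
    have hid : (u' t - s - u'' t * (2 * t - a - b) / 2) * (b - a)
        = (u a - u t - u' t * (a - t) - u'' t * (a - t) ^ 2 / 2)
          - (u b - u t - u' t * (b - t) - u'' t * (b - t) ^ 2 / 2) := by
      rw [hs_def]
      field_simp
      ring
    have h4 : |u' t - s - u'' t * (2 * t - a - b) / 2| * (b - a)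
        ≤ (2 * M * (b - a) ^ 2) * (b - a) := by
      have habs : |u' t - s - u'' t * (2 * t - a - b) / 2| * (b - a)
          = |(u' t - s - u'' t * (2 * t - a - b) / 2) * (b - a)| := by
        rw [abs_mul, abs_of_pos hab']
      rw [habs, hid]
      calc |(u a - u t - u' t * (a - t) - u'' t * (a - t) ^ 2 / 2) - (u b - u t - u' t * (b - t) - u'' t * (b - t) ^ 2 / 2)| ≤ |u a - u t - u' t * (a - t) - u'' t * (a - t) ^ 2 / 2| + |u b - u t - u' t * (b - t) - u'' t * (b - t) ^ 2 / 2| := abs_sub _ _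
        _ ≤ M * (b - a) ^ 2 * (b - a) + M * (b - a) ^ 2 * (b - a) := add_le_add hRa' hRb'
        _ = (2 * M * (b - a) ^ 2) * (b - a) := by ring
    exact le_of_mul_le_mul_right h4 hab'
  -- the modified interpolant on the element
  set L : ℝ → ℝ := fun τ => u a + s * (τ - a) with hL_def
  set g : ℝ → ℝ := fun τ => (q τ * L τ - f τ - β' τ * s) / (2 * β τ) with hg_def
  set w : ℝ → ℝ := fun τ => L τ + (τ - a) * (τ - b) * g τ with hw_def
  have hβtpos : 0 < β t := hβpos t htmem
  have hβtne : (2 : ℝ) * β t ≠ 0 := by positivity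
  have hvw : ∀ τ ∈ Icc a b, vh τ = w τ := by
    intro τ hτ
    have h2 : β τ ≠ 0 := ne_of_gt (hβpos τ (hIcc hτ))
    have h1 : b - a ≠ 0 := ne_of_gt hab'
    rw [hvh τ hτ]
    simp only [hw_def, hL_def, hg_def, hs_def]
    field_simp
    ring
  have hLd : HasDerivAt L s t := by
    rw [hL_def]
    simpa using (((hasDerivAt_id t).sub_const a).const_mul s).const_add (u a)
  set gd : ℝ := ((q' t * L t + q t * s - f' t - β'' t * s) * (2 * β t)
      - (q t * L t - f t - β' t * s) * (2 * β' t)) / (2 * β t) ^ 2 with hgd_def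
  have hNd : HasDerivAt (fun τ => q τ * L τ - f τ - β' τ * s)
      (q' t * L t + q t * s - f' t - β'' t * s) t := by
    exact ((hqt.mul hLd).sub hft).sub (hβ't.mul_const s)
  have hDd : HasDerivAt (fun τ => 2 * β τ) (2 * β' t) t := by
    simpa using hβt.const_mul 2
  have hgdiv : HasDerivAt g gd t := by
    rw [hg_def, hgd_def]
    exact hNd.div hDd hβtne
  have hBd : HasDerivAt (fun τ => (τ - a) * (τ - b)) ((t - b) + (t - a)) t := by
    have h1 := ((hasDerivAt_id t).sub_const a).mul ((hasDerivAt_id t).sub_const b)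
    have h2 : HasDerivAt (fun τ => (τ - a) * (τ - b)) (1 * (t - b) + (t - a) * 1) t := h1
    convert h2 using 1; ring
  have hwd : HasDerivAt w (s + (((t - b) + (t - a)) * g t + (t - a) * (t - b) * gd)) t := by
    rw [hw_def]
    exact hLd.add (hBd.mul hgdiv)
  have hdvh : deriv vh t = s + (((t - b) + (t - a)) * g t + (t - a) * (t - b) * gd) := by
    have hev : vh =ᶠ[nhds t] w :=
      Filter.eventuallyEq_of_mem (Ioo_mem_nhds ht.1 ht.2)
        (fun τ hτ => hvw τ (Ioo_subset_Icc_self hτ))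
    rw [hev.deriv_eq, hwd.deriv]
  -- basic geometric bounds
  have hta : |t - a| ≤ b - a := by
    rw [abs_of_pos (sub_pos.mpr ht.1)]; linarith [ht.2]
  have htb : |t - b| ≤ b - a := by
    rw [abs_of_neg (sub_neg.mpr ht.2)]; linarith [ht.1]
  have h2t : |2 * t - a - b| ≤ b - a := by
    rw [abs_le]; exact ⟨by linarith [ht.1], by linarith [ht.2]⟩
  have hLt : |L t| ≤ M + M * (xr - xl) := by
    simp only [hL_def]
    have h1 : |t - a| ≤ xr - xl := le_trans hta hD
    calc |u a + s * (t - a)| ≤ |u a| + |s * (t - a)| := abs_add_le _ _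
      _ ≤ M + M * (xr - xl) := add_le_add (hbu a haK) (abs_mul_le' hsb h1)
  have h2βub : |2 * β t| ≤ 2 * M := by
    rw [abs_mul, abs_two]
    exact mul_le_mul_of_nonneg_left (hbβ t htmem) (by norm_num)
  have h2β'ub : |2 * β' t| ≤ 2 * M := by
    rw [abs_mul, abs_two]
    exact mul_le_mul_of_nonneg_left (hbβ' t htmem) (by norm_num)
  have hNb : |q t * L t - f t - β' t * s| ≤ M * (M + M * (xr - xl)) + M + M * M := by
    calc |q t * L t - f t - β' t * s|
        ≤ |q t * L t - f t| + |β' t * s| := abs_sub _ _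
      _ ≤ (|q t * L t| + |f t|) + |β' t * s| := add_le_add_left (abs_sub _ _) _
      _ ≤ (M * (M + M * (xr - xl)) + M) + M * M :=
          add_le_add (add_le_add (abs_mul_le' (hbq t htmem) hLt) (hbf t htmem))
            (abs_mul_le' (hbβ' t htmem) hsb)
      _ = M * (M + M * (xr - xl)) + M + M * M := by ring
  have hN'b : |q' t * L t + q t * s - f' t - β'' t * s|
      ≤ M * (M + M * (xr - xl)) + M * M + M + M * M := by
    calc |q' t * L t + q t * s - f' t - β'' t * s|
        ≤ |q' t * L t + q t * s - f' t| + |β'' t * s| := abs_sub _ _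
      _ ≤ (|q' t * L t + q t * s| + |f' t|) + |β'' t * s| := add_le_add_left (abs_sub _ _) _
      _ ≤ ((|q' t * L t| + |q t * s|) + |f' t|) + |β'' t * s| :=
          add_le_add_left (add_le_add_left (abs_add_le _ _) _) _
      _ ≤ ((M * (M + M * (xr - xl)) + M * M) + M) + M * M :=
          add_le_add (add_le_add (add_le_add (abs_mul_le' (hbq' t htmem) hLt)
            (abs_mul_le' (hbq t htmem) hsb)) (hbf' t htmem))
            (abs_mul_le' (hbβ'' t htmem) hsb)
      _ = M * (M + M * (xr - xl)) + M * M + M + M * M := by ring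
  have hgdb : |gd| ≤ (2 * M * (M * (M + M * (xr - xl)) + M * M + M + M * M)
      + (M * (M + M * (xr - xl)) + M + M * M) * (2 * M)) / (2 * β₀) ^ 2 := by
    have hDpos : (0:ℝ) ≤ xr - xl := by linarith
    rw [hgd_def, abs_div]
    have hnumb : |(q' t * L t + q t * s - f' t - β'' t * s) * (2 * β t)
        - (q t * L t - f t - β' t * s) * (2 * β' t)|
        ≤ 2 * M * (M * (M + M * (xr - xl)) + M * M + M + M * M)
          + (M * (M + M * (xr - xl)) + M + M * M) * (2 * M) := by
      calc |(q' t * L t + q t * s - f' t - β'' t * s) * (2 * β t)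
          - (q t * L t - f t - β' t * s) * (2 * β' t)|
          ≤ |(q' t * L t + q t * s - f' t - β'' t * s) * (2 * β t)|
            + |(q t * L t - f t - β' t * s) * (2 * β' t)| := abs_sub _ _
        _ ≤ (M * (M + M * (xr - xl)) + M * M + M + M * M) * (2 * M)
            + (M * (M + M * (xr - xl)) + M + M * M) * (2 * M) :=
            add_le_add (abs_mul_le' hN'b h2βub) (abs_mul_le' hNb h2β'ub)
        _ = 2 * M * (M * (M + M * (xr - xl)) + M * M + M + M * M)
            + (M * (M + M * (xr - xl)) + M + M * M) * (2 * M) := by ring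
    refine div_le_div₀ (le_trans (abs_nonneg _) hnumb) hnumb (by positivity) ?_
    rw [abs_of_nonneg (sq_nonneg _)]
    exact pow_le_pow_left₀ (by positivity) (by linarith [hβlb t htmem]) 2
  -- the B-term
  have hBt : g t - u'' t / 2 = (q t * (L t - u t) + β' t * (u' t - s)) / (2 * β t) := by
    have h0 := hode t htmem
    have hdiff : (q t * L t - f t - β' t * s) / (2 * β t) - u'' t / 2
        = (q t * L t - f t - β' t * s - β t * u'' t) / (2 * β t) := by
      field_simp
    have hnum : q t * L t - f t - β' t * s - β t * u'' t
        = q t * (L t - u t) + β' t * (u' t - s) := by linear_combination -h0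
    simp only [hg_def]
    rw [hdiff, hnum]
  have hBtb : |g t - u'' t / 2|
      ≤ (M * (M * (b - a) * (b - a)) + M * (M * (b - a))) / (2 * β₀) := by
    rw [hBt, abs_div]
    have hLu : |L t - u t| ≤ M * (b - a) * (b - a) := by
        simp only [hL_def]
        rw [abs_sub_comm]
        exact huL t htab
    have hnumb : |q t * (L t - u t) + β' t * (u' t - s)|
        ≤ M * (M * (b - a) * (b - a)) + M * (M * (b - a)) := by
      calc |q t * (L t - u t) + β' t * (u' t - s)|
          ≤ |q t * (L t - u t)| + |β' t * (u' t - s)| := abs_add_le _ _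
        _ ≤ M * (M * (b - a) * (b - a)) + M * (M * (b - a)) :=
            add_le_add (abs_mul_le' (hbq t htmem) hLu)
              (abs_mul_le' (hbβ' t htmem) (hu's t htab))
    refine div_le_div₀ (le_trans (abs_nonneg _) hnumb) hnumb (by positivity) ?_
    rw [abs_of_pos (by positivity : (0:ℝ) < 2 * β t)]
    linarith [hβlb t htmem]
  -- assemble
  have hsplit : u' t - deriv vh t
      = (u' t - s - u'' t * (2 * t - a - b) / 2)
        - (2 * t - a - b) * (g t - u'' t / 2) - (t - a) * (t - b) * gd := by
    rw [hdvh]; ring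
  rw [hsplit]
  have hYb : |(2 * t - a - b) * (g t - u'' t / 2)|
      ≤ (b - a) * ((M * (M * (b - a) * (b - a)) + M * (M * (b - a))) / (2 * β₀)) :=
    abs_mul_le' h2t hBtb
  have hZb : |(t - a) * (t - b) * gd|
      ≤ ((b - a) * (b - a)) * ((2 * M * (M * (M + M * (xr - xl)) + M * M + M + M * M)
        + (M * (M + M * (xr - xl)) + M + M * M) * (2 * M)) / (2 * β₀) ^ 2) :=
    abs_mul_le' (abs_mul_le' hta htb) hgdb
  have hYb' : (b - a) * ((M * (M * (b - a) * (b - a)) + M * (M * (b - a))) / (2 * β₀))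
      ≤ M ^ 2 * (xr - xl + 1) / (2 * β₀) * (b - a) ^ 2 := by
    rw [mul_div_assoc', div_mul_eq_mul_div,
      div_le_div_iff₀ (by positivity) (by positivity)]
    have hkey : 0 ≤ M * M * (b - a) ^ 2 * ((xr - xl) - (b - a)) :=
      mul_nonneg (mul_nonneg (mul_nonneg hM0 hM0) (sq_nonneg _)) (sub_nonneg.mpr hD)
    nlinarith [mul_nonneg hβ₀.le hkey, hab'.le]
  calc |(u' t - s - u'' t * (2 * t - a - b) / 2)
        - (2 * t - a - b) * (g t - u'' t / 2) - (t - a) * (t - b) * gd|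
      ≤ |(u' t - s - u'' t * (2 * t - a - b) / 2)
        - (2 * t - a - b) * (g t - u'' t / 2)| + |(t - a) * (t - b) * gd| := abs_sub _ _
    _ ≤ (|u' t - s - u'' t * (2 * t - a - b) / 2|
        + |(2 * t - a - b) * (g t - u'' t / 2)|) + |(t - a) * (t - b) * gd| :=
        add_le_add_left (abs_sub _ _) _
    _ ≤ (2 * M * (b - a) ^ 2 + M ^ 2 * (xr - xl + 1) / (2 * β₀) * (b - a) ^ 2)
        + ((b - a) * (b - a)) * ((2 * M * (M * (M + M * (xr - xl)) + M * M + M + M * M)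
          + (M * (M + M * (xr - xl)) + M + M * M) * (2 * M)) / (2 * β₀) ^ 2) :=
        add_le_add (add_le_add hA (le_trans hYb hYb')) hZb
    _ = (2 * M + M ^ 2 * (xr - xl + 1) / (2 * β₀)
        + (2 * M * (M * (M + M * (xr - xl)) + M * M + M + M * M)
           + (M * (M + M * (xr - xl)) + M + M * M) * (2 * M)) / (2 * β₀) ^ 2)
        * (b - a) ^ 2 := by ring


end ElemLemma



/-- For the Sturm–Liouville equation `β u'' + β' u' − q u + f = 0` on
`[x_l, x_r]` with `β ∈ C²`, `β ≥ β₀ > 0`, `q, f ∈ C¹` and `u ∈ C³`, there is a constant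
`C > 0` such that for every partition `x_l = x 0 < x 1 < ⋯ < x n = x_r` with mesh size `h`,
the piecewise modified (bubble-corrected) interpolant `v_h^{new}` satisfies the derivative
bound `|u' t − (v_h^{new})' t| ≤ C h²` in the interior of every element. -/
theorem modified_interpolant_second_order_derivative_mesh
    (xl xr β₀ : ℝ) (hlr : xl < xr) (hβ₀ : 0 < β₀)
    (β β' β'' q q' f f' u u' u'' u''' : ℝ → ℝ)
    (hβd : ∀ t ∈ Set.Icc xl xr, HasDerivWithinAt β (β' t) (Set.Icc xl xr) t)
    (hβd2 : ∀ t ∈ Set.Icc xl xr, HasDerivWithinAt β' (β'' t) (Set.Icc xl xr) t)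
    (hβ''c : ContinuousOn β'' (Set.Icc xl xr))
    (hβlb : ∀ t ∈ Set.Icc xl xr, β₀ ≤ β t)
    (hqd : ∀ t ∈ Set.Icc xl xr, HasDerivWithinAt q (q' t) (Set.Icc xl xr) t)
    (hq'c : ContinuousOn q' (Set.Icc xl xr))
    (hfd : ∀ t ∈ Set.Icc xl xr, HasDerivWithinAt f (f' t) (Set.Icc xl xr) t)
    (hf'c : ContinuousOn f' (Set.Icc xl xr))
    (hu' : ∀ t ∈ Set.Icc xl xr, HasDerivWithinAt u (u' t) (Set.Icc xl xr) t)
    (hu'' : ∀ t ∈ Set.Icc xl xr, HasDerivWithinAt u' (u'' t) (Set.Icc xl xr) t)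
    (hu''' : ∀ t ∈ Set.Icc xl xr, HasDerivWithinAt u'' (u''' t) (Set.Icc xl xr) t)
    (hu'''c : ContinuousOn u''' (Set.Icc xl xr))
    (hode : ∀ t ∈ Set.Icc xl xr, β t * u'' t + β' t * u' t - q t * u t + f t = 0) :
    ∃ C > 0, ∀ (n : ℕ) (hn : 1 ≤ n) (x : ℕ → ℝ),
      x 0 = xl → x n = xr → (∀ k < n, x k < x (k + 1)) →
      ∀ H : ℝ, H = (Finset.range n).sup' (Finset.nonempty_range_iff.mpr (by omega))
          (fun k => x (k + 1) - x k) →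
      ∀ vh : ℝ → ℝ,
        (∀ k < n, ∀ t ∈ Set.Icc (x k) (x (k + 1)),
          vh t = (u (x k) * (x (k + 1) - t) / (x (k + 1) - x k)
              + u (x (k + 1)) * (t - x k) / (x (k + 1) - x k))
            - β' t / (2 * β t) * (t - x k) * (t - x (k + 1))
              * ((u (x (k + 1)) - u (x k)) / (x (k + 1) - x k))
            + q t / (2 * β t) * (t - x k) * (t - x (k + 1))
              * (u (x k) * (x (k + 1) - t) / (x (k + 1) - x k)
                + u (x (k + 1)) * (t - x k) / (x (k + 1) - x k))
            - f t / (2 * β t) * (t - x k) * (t - x (k + 1))) →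
        ∀ k < n, ∀ t ∈ Set.Ioo (x k) (x (k + 1)),
          |u' t - deriv vh t| ≤ C * H ^ 2 := by
  -- continuity of all data functions
  have hcβ : ContinuousOn β (Set.Icc xl xr) := fun τ hτ => (hβd τ hτ).continuousWithinAt
  have hcβ' : ContinuousOn β' (Set.Icc xl xr) := fun τ hτ => (hβd2 τ hτ).continuousWithinAt
  have hcq : ContinuousOn q (Set.Icc xl xr) := fun τ hτ => (hqd τ hτ).continuousWithinAt
  have hcf : ContinuousOn f (Set.Icc xl xr) := fun τ hτ => (hfd τ hτ).continuousWithinAt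
  have hcu : ContinuousOn u (Set.Icc xl xr) := fun τ hτ => (hu' τ hτ).continuousWithinAt
  have hcu' : ContinuousOn u' (Set.Icc xl xr) := fun τ hτ => (hu'' τ hτ).continuousWithinAt
  have hcu'' : ContinuousOn u'' (Set.Icc xl xr) := fun τ hτ => (hu''' τ hτ).continuousWithinAt
  obtain ⟨M1, hM1⟩ := isCompact_Icc.exists_bound_of_continuousOn hcβ
  obtain ⟨M2, hM2⟩ := isCompact_Icc.exists_bound_of_continuousOn hcβ'
  obtain ⟨M3, hM3⟩ := isCompact_Icc.exists_bound_of_continuousOn hβ''c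
  obtain ⟨M4, hM4⟩ := isCompact_Icc.exists_bound_of_continuousOn hcq
  obtain ⟨M5, hM5⟩ := isCompact_Icc.exists_bound_of_continuousOn hq'c
  obtain ⟨M6, hM6⟩ := isCompact_Icc.exists_bound_of_continuousOn hcf
  obtain ⟨M7, hM7⟩ := isCompact_Icc.exists_bound_of_continuousOn hf'c
  obtain ⟨M8, hM8⟩ := isCompact_Icc.exists_bound_of_continuousOn hcu
  obtain ⟨M9, hM9⟩ := isCompact_Icc.exists_bound_of_continuousOn hcu'
  obtain ⟨M10, hM10⟩ := isCompact_Icc.exists_bound_of_continuousOn hcu''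
  obtain ⟨M11, hM11⟩ := isCompact_Icc.exists_bound_of_continuousOn hu'''c
  set M : ℝ := 1 + (|M1| + |M2| + |M3| + |M4| + |M5| + |M6| + |M7| + |M8| + |M9| + |M10| + |M11|)
    with hM_def
  have hnn1 := abs_nonneg M1; have hnn2 := abs_nonneg M2; have hnn3 := abs_nonneg M3
  have hnn4 := abs_nonneg M4; have hnn5 := abs_nonneg M5; have hnn6 := abs_nonneg M6
  have hnn7 := abs_nonneg M7; have hnn8 := abs_nonneg M8; have hnn9 := abs_nonneg M9
  have hnn10 := abs_nonneg M10; have hnn11 := abs_nonneg M11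
  have hle1 := le_abs_self M1; have hle2 := le_abs_self M2; have hle3 := le_abs_self M3
  have hle4 := le_abs_self M4; have hle5 := le_abs_self M5; have hle6 := le_abs_self M6
  have hle7 := le_abs_self M7; have hle8 := le_abs_self M8; have hle9 := le_abs_self M9
  have hle10 := le_abs_self M10; have hle11 := le_abs_self M11
  have hM : 1 ≤ M := by rw [hM_def]; linarith
  have hM0 : (0:ℝ) ≤ M := le_trans zero_le_one hM
  have hbβ : ∀ τ ∈ Set.Icc xl xr, |β τ| ≤ M := fun τ hτ =>
    le_trans (by simpa [Real.norm_eq_abs] using hM1 τ hτ) (by rw [hM_def]; linarith)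
  have hbβ' : ∀ τ ∈ Set.Icc xl xr, |β' τ| ≤ M := fun τ hτ =>
    le_trans (by simpa [Real.norm_eq_abs] using hM2 τ hτ) (by rw [hM_def]; linarith)
  have hbβ'' : ∀ τ ∈ Set.Icc xl xr, |β'' τ| ≤ M := fun τ hτ =>
    le_trans (by simpa [Real.norm_eq_abs] using hM3 τ hτ) (by rw [hM_def]; linarith)
  have hbq : ∀ τ ∈ Set.Icc xl xr, |q τ| ≤ M := fun τ hτ =>
    le_trans (by simpa [Real.norm_eq_abs] using hM4 τ hτ) (by rw [hM_def]; linarith)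
  have hbq' : ∀ τ ∈ Set.Icc xl xr, |q' τ| ≤ M := fun τ hτ =>
    le_trans (by simpa [Real.norm_eq_abs] using hM5 τ hτ) (by rw [hM_def]; linarith)
  have hbf : ∀ τ ∈ Set.Icc xl xr, |f τ| ≤ M := fun τ hτ =>
    le_trans (by simpa [Real.norm_eq_abs] using hM6 τ hτ) (by rw [hM_def]; linarith)
  have hbf' : ∀ τ ∈ Set.Icc xl xr, |f' τ| ≤ M := fun τ hτ =>
    le_trans (by simpa [Real.norm_eq_abs] using hM7 τ hτ) (by rw [hM_def]; linarith)
  have hbu : ∀ τ ∈ Set.Icc xl xr, |u τ| ≤ M := fun τ hτ =>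
    le_trans (by simpa [Real.norm_eq_abs] using hM8 τ hτ) (by rw [hM_def]; linarith)
  have hbu' : ∀ τ ∈ Set.Icc xl xr, |u' τ| ≤ M := fun τ hτ =>
    le_trans (by simpa [Real.norm_eq_abs] using hM9 τ hτ) (by rw [hM_def]; linarith)
  have hbu'' : ∀ τ ∈ Set.Icc xl xr, |u'' τ| ≤ M := fun τ hτ =>
    le_trans (by simpa [Real.norm_eq_abs] using hM10 τ hτ) (by rw [hM_def]; linarith)
  have hbu''' : ∀ τ ∈ Set.Icc xl xr, |u''' τ| ≤ M := fun τ hτ =>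
    le_trans (by simpa [Real.norm_eq_abs] using hM11 τ hτ) (by rw [hM_def]; linarith)
  -- the constant
  have hDpos : (0:ℝ) ≤ xr - xl := by linarith
  have hA1 : (0:ℝ) ≤ M + M * (xr - xl) := by
    have := mul_nonneg hM0 hDpos; linarith
  have hA2 : (0:ℝ) ≤ M * (M + M * (xr - xl)) := mul_nonneg hM0 hA1
  have hMM : (0:ℝ) ≤ M * M := mul_nonneg hM0 hM0
  have hA3 : (0:ℝ) ≤ M * (M + M * (xr - xl)) + M * M + M + M * M := by linarith
  have hA4 : (0:ℝ) ≤ M * (M + M * (xr - xl)) + M + M * M := by linarith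
  have hT2 : (0:ℝ) ≤ M ^ 2 * (xr - xl + 1) / (2 * β₀) :=
    div_nonneg (mul_nonneg (sq_nonneg M) (by linarith)) (by positivity)
  have hT3 : (0:ℝ) ≤ (2 * M * (M * (M + M * (xr - xl)) + M * M + M + M * M)
      + (M * (M + M * (xr - xl)) + M + M * M) * (2 * M)) / (2 * β₀) ^ 2 :=
    div_nonneg (add_nonneg (mul_nonneg (by linarith) hA3) (mul_nonneg hA4 (by linarith)))
      (by positivity)
  refine ⟨2 * M + M ^ 2 * (xr - xl + 1) / (2 * β₀)
      + (2 * M * (M * (M + M * (xr - xl)) + M * M + M + M * M)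
        + (M * (M + M * (xr - xl)) + M + M * M) * (2 * M)) / (2 * β₀) ^ 2,
    by linarith, ?_⟩
  intro n hn x h0 hN hlt H hH vh hvh k hk t ht
  have mono : ∀ i j : ℕ, i ≤ j → j ≤ n → x i ≤ x j := by
    intro i j hij hjn
    induction j with
    | zero =>
      have hi0 : i = 0 := Nat.le_zero.mp hij
      subst hi0; exact le_rfl
    | succ m ih =>
      rcases Nat.eq_or_lt_of_le hij with h | h
      · subst h; exact le_rfl
      · exact le_trans (ih (Nat.lt_succ_iff.mp h) (by omega)) (le_of_lt (hlt m (by omega)))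
  have haK : xl ≤ x k := h0 ▸ mono 0 k (Nat.zero_le _) (by omega)
  have hbK : x (k + 1) ≤ xr := hN ▸ mono (k + 1) n (by omega) le_rfl
  have hab : x k < x (k + 1) := hlt k hk
  have hHk : x (k + 1) - x k ≤ H := by
    rw [hH]; exact Finset.le_sup' (fun k => x (k + 1) - x k) (Finset.mem_range.mpr hk)
  have hmain := elem_bound hlr hβ₀ hM hβd hβd2 hβlb hqd hfd hu' hu'' hu''' hode
    hbβ hbβ' hbβ'' hbq hbq' hbf hbf' hbu hbu' hbu'' hbu'''
    (x k) (x (k + 1)) haK hbK hab vh (hvh k hk) t ht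
  refine le_trans hmain ?_
  have hsq : (x (k + 1) - x k) ^ 2 ≤ H ^ 2 :=
    pow_le_pow_left₀ (by linarith) hHk 2
  exact mul_le_mul_of_nonneg_left hsq (by linarith)
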